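/- The semantics of the unidirectionally recursive Hadamard walk syntactic approximations: for every n ≥ 1, the operator ⟦X^{(n)}⟧ = Σ_{i=0}^{n−1} [ (⊗_{j=0}^{i−1} |R⟩_{d_j}⟨R| ⊗ |L⟩_{d_i}⟨L|) H^{⊗(i+1)} ⊗ T_L T_R^i ] satisfies the recurrence ⟦X^{(n+1)}⟧ = (|L⟩⟨L| ⊗ T_L + |R⟩⟨R| ⊗ (T_R · shifted ⟦X^{(n)}⟧))(H ⊗ I), where the shifted term tensors an extra coin factor in front. -/

import Mathlib

open Classical

noncomputable section

/-- Basis index of the space `⊕_{i≥0} H_d^{⊗(i+1)} ⊗ H_p` in which the syntactic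
approximations of the unidirectionally recursive Hadamard walk live: a grade `i`, a string
of `i+1` coin states (`false = L`, `true = R`, for coins `d_0,…,d_i`) and a position in
`ℤ`. -/
abbrev WalkIdx : Type := (Σ i : ℕ, (Fin (i + 1) → Bool)) × ℤ

/-- the ambient space `⊕_{i≥0} H_d^{⊗(i+1)} ⊗ H_p` (algebraically). -/
abbrev WalkSp : Type := WalkIdx →₀ ℂ

/-- basis vector. -/
def bas (a : WalkIdx) : WalkSp := Finsupp.single a 1

/-- the linear operator determined by its values on basis vectors. -/
def oper (g : WalkIdx → WalkSp) : WalkSp →ₗ[ℂ] WalkSp :=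
  Finsupp.lsum ℂ fun a => LinearMap.toSpanSingleton ℂ WalkSp (g a)

/-- translation of the position by `z`; `T_L = shiftPos (-1)`, `T_R = shiftPos 1`, and
`T_L T_R^i = shiftPos (i - 1)`. -/
def shiftPos (z : ℤ) : WalkSp →ₗ[ℂ] WalkSp :=
  Finsupp.lmapDomain ℂ ℂ fun a => (a.1, a.2 + z)

/-- Hadamard matrix entry `⟨a|H|b⟩`. -/
def had (a b : Bool) : ℂ := (Real.sqrt 2 : ℂ)⁻¹ * (if a && b then -1 else 1)

/-- `H^{⊗(i+1)} ⊗ I`: the Hadamard transform applied to every coin of each grade. -/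
def hadAll : WalkSp →ₗ[ℂ] WalkSp :=
  oper fun a => ∑ t : Fin (a.1.1 + 1) → Bool,
    (∏ k, had (t k) (a.1.2 k)) • bas (⟨⟨a.1.1, t⟩, a.2⟩)

/-- `H ⊗ I`: the Hadamard transform applied to the first coin `d_0` only. -/
def hadFirst : WalkSp →ₗ[ℂ] WalkSp :=
  oper fun a => ∑ b : Bool,
    had b (a.1.2 0) • bas (⟨⟨a.1.1, Function.update a.1.2 0 b⟩, a.2⟩)

/-- the projection `⊗_{j=0}^{i-1} |R⟩_{d_j}⟨R| ⊗ |L⟩_{d_i}⟨L|` onto grade `i` with coin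
string `R…RL`. -/
def projQ (i : ℕ) : WalkSp →ₗ[ℂ] WalkSp :=
  oper fun a =>
    if a.1.1 = i ∧ ∀ k : Fin (a.1.1 + 1), a.1.2 k = decide ((k : ℕ) < a.1.1) then bas a
    else 0

/-- the projection `|R⟩_{d_0}⟨R|` on the first coin (tensor identity elsewhere). -/
def projR : WalkSp →ₗ[ℂ] WalkSp :=
  oper fun a => if a.1.2 0 = true then bas a else 0

/-- tensoring a fresh front coin in state `b`: `e_{(i,t,m)} ↦ e_{(i+1, b::t, m)}`. -/
def attach (b : Bool) : WalkSp →ₗ[ℂ] WalkSp :=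
  Finsupp.lmapDomain ℂ ℂ fun a => (⟨a.1.1 + 1, Fin.cons b a.1.2⟩, a.2)

/-- the shift of an operator `X` by one coin: `(I_{d_0} ⊗ X)`, acting as `X` on the coins
`d_1, d_2, …` and on the position, and as the identity on the new front coin `d_0`;
this realises the renaming of coins in the substitution defining the syntactic
approximations. -/
def Kop (X : WalkSp →ₗ[ℂ] WalkSp) : WalkSp →ₗ[ℂ] WalkSp :=
  oper fun a =>
    match a with
    | (⟨0, _⟩, _) => 0
    | (⟨i + 1, s⟩, z) => attach (s 0) (X (bas (⟨i, fun k => s k.succ⟩, z)))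

/-- the semantics of the `n`-th syntactic approximation of the unidirectionally recursive
Hadamard walk `X ⇐ T_L ⊕_{H[d]} (T_R ; X)`:
`⟦X^{(n)}⟧ = Σ_{i=0}^{n−1} (⊗_{j<i} |R⟩_{d_j}⟨R| ⊗ |L⟩_{d_i}⟨L|) H^{⊗(i+1)} ⊗ T_L T_R^i`. -/
def Xapprox (n : ℕ) : WalkSp →ₗ[ℂ] WalkSp :=
  ∑ i ∈ Finset.range n, shiftPos ((i : ℤ) - 1) ∘ₗ projQ i ∘ₗ hadAll

-- aux
def qstr (i : ℕ) : Fin (i + 1) → Bool := fun k => decide ((k : ℕ) < i)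

lemma oper_bas (g : WalkIdx → WalkSp) (a : WalkIdx) : oper g (bas a) = g a := by
  simp [oper, bas]

lemma shiftPos_bas (z : ℤ) (s : Σ i : ℕ, Fin (i+1) → Bool) (m : ℤ) :
    shiftPos z (bas (s, m)) = bas (s, m + z) := by
  simp [shiftPos, bas, Finsupp.lmapDomain_apply, Finsupp.mapDomain_single]

lemma attach_bas (b : Bool) (i : ℕ) (t : Fin (i+1) → Bool) (m : ℤ) :
    attach b (bas (⟨i, t⟩, m)) = bas (⟨i + 1, Fin.cons b t⟩, m) := by
  simp [attach, bas, Finsupp.lmapDomain_apply, Finsupp.mapDomain_single]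

lemma walk_ext {f g : WalkSp →ₗ[ℂ] WalkSp} (h : ∀ a, f (bas a) = g (bas a)) : f = g := by
  refine Finsupp.lhom_ext fun a c => ?_
  have : (Finsupp.single a c : WalkSp) = c • bas a := by
    simp [bas, Finsupp.smul_single]
  rw [this, map_smul, map_smul, h]

lemma projQ_bas (j i : ℕ) (t : Fin (i+1) → Bool) (m : ℤ) :
    projQ j (bas (⟨i, t⟩, m)) =
      if i = j ∧ t = qstr i then bas (⟨i, t⟩, m) else 0 := by
  rw [projQ, oper_bas]
  simp [qstr, funext_iff]

lemma projQ_hadAll_bas (j i : ℕ) (s : Fin (i+1) → Bool) (m : ℤ) :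
    projQ j (hadAll (bas (⟨i, s⟩, m))) =
      if i = j then (∏ k, had (qstr i k) (s k)) • bas (⟨⟨i, qstr i⟩, m⟩) else 0 := by
  rw [hadAll, oper_bas]
  simp only [map_sum, map_smul, projQ_bas, smul_ite, smul_zero]
  by_cases h : i = j
  · subst h
    simp [Finset.sum_ite_eq' Finset.univ (qstr i)]
  · simp [h]

lemma hadFirst_bas (i : ℕ) (s : Fin (i+1) → Bool) (m : ℤ) :
    hadFirst (bas (⟨i, s⟩, m)) =
      ∑ b : Bool, had b (s 0) • bas (⟨⟨i, Function.update s 0 b⟩, m⟩) := by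
  rw [hadFirst, oper_bas]

lemma projR_bas (i : ℕ) (t : Fin (i+1) → Bool) (m : ℤ) :
    projR (bas (⟨i, t⟩, m)) = if t 0 = true then bas (⟨i, t⟩, m) else 0 := by
  rw [projR, oper_bas]

lemma Kop_bas_zero (X : WalkSp →ₗ[ℂ] WalkSp) (s : Fin 1 → Bool) (m : ℤ) :
    Kop X (bas (⟨0, s⟩, m)) = 0 := by
  rw [Kop, oper_bas]

lemma Kop_bas_succ (X : WalkSp →ₗ[ℂ] WalkSp) (j : ℕ) (s : Fin (j+2) → Bool) (m : ℤ) :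
    Kop X (bas (⟨j + 1, s⟩, m)) =
      attach (s 0) (X (bas (⟨j, fun k => s k.succ⟩, m))) := by
  rw [Kop, oper_bas]

lemma Xapprox_bas (n i : ℕ) (s : Fin (i+1) → Bool) (m : ℤ) :
    Xapprox n (bas (⟨i, s⟩, m)) =
      if i < n then (∏ k, had (qstr i k) (s k)) • bas (⟨⟨i, qstr i⟩, m + ((i : ℤ) - 1)⟩)
      else 0 := by
  rw [Xapprox]
  simp only [LinearMap.sum_apply, LinearMap.comp_apply, projQ_hadAll_bas, apply_ite,
    map_zero, map_smul, shiftPos_bas]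
  rw [Finset.sum_ite_eq]
  simp only [Finset.mem_range]
  split <;> simp_all

/-- **The recurrence for the syntactic approximations of the unidirectionally recursive
Hadamard walk**: for every `n ≥ 1`,
`⟦X^{(n+1)}⟧ = (|L⟩⟨L| ⊗ T_L + |R⟩⟨R| ⊗ (T_R · shifted ⟦X^{(n)}⟧))(H ⊗ I)`,
where the shifted term tensors an extra coin factor in front. -/
theorem recursive_hadamard_walk_approximation (n : ℕ) (hn : 1 ≤ n) :
    Xapprox (n + 1) =
      (projQ 0 ∘ₗ shiftPos (-1) + projR ∘ₗ shiftPos 1 ∘ₗ Kop (Xapprox n)) ∘ₗ hadFirst := by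
  refine walk_ext fun a => ?_
  obtain ⟨⟨i, s⟩, m⟩ := a
  rw [LinearMap.comp_apply, hadFirst_bas, map_sum]
  simp only [LinearMap.add_apply, LinearMap.comp_apply, map_smul]
  cases i with
  | zero =>
      have hupd : Function.update s 0 (false : Bool) = qstr 0 := by
        funext k
        have hk : k = 0 := Fin.ext (by omega)
        subst hk
        simp [qstr]
      have h1 : Function.update s 0 (true : Bool) ≠ qstr 0 := by
        intro h
        have := congrFun h 0
        simp [qstr] at this
      rw [Xapprox_bas]
      simp only [Fintype.sum_bool, Kop_bas_zero, map_zero, smul_zero, add_zero, zero_add,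
        shiftPos_bas, projQ_bas, hupd]
      rw [if_pos (Nat.succ_pos n), if_neg (by simp [h1])]
      simp only [smul_zero, zero_add, and_self, if_true]
      norm_num [Fin.prod_univ_succ, qstr]
  | succ j =>
      have htail : ∀ b : Bool,
          (fun k : Fin (j+1) => Function.update s 0 b k.succ) = fun k => s k.succ := by
        intro b; funext k
        exact Function.update_of_ne (Fin.succ_ne_zero k) _ _
      have hA1 : ∀ b : Bool,
          projQ 0 (shiftPos (-1) (bas (⟨j+1, Function.update s 0 b⟩, m))) = 0 := by
        intro b
        rw [shiftPos_bas, projQ_bas, if_neg]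
        rintro ⟨h, -⟩
        exact Nat.succ_ne_zero j h
      rw [Xapprox_bas]
      simp only [Fintype.sum_bool, Kop_bas_succ, htail, Function.update_self, Xapprox_bas]
      by_cases hjn : j < n
      · rw [if_pos (show j + 1 < n + 1 by omega)]
        rw [hA1, hA1]
        simp only [hjn, if_true]
        simp only [map_smul, attach_bas, shiftPos_bas, projR_bas, Fin.cons_zero, zero_add]
        simp only [if_true, Bool.false_eq_true, if_false]
        simp only [smul_zero, add_zero]
        have hcons : Fin.cons true (qstr j) = qstr (j + 1) := by
          funext k
          refine Fin.cases ?_ (fun k => ?_) k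
          · simp [qstr]
          · simp [qstr, Fin.cons_succ, Fin.val_succ, Nat.succ_lt_succ_iff]
        have hprod : (∏ k : Fin (j+2), had (qstr (j+1) k) (s k)) =
            had true (s 0) * ∏ k : Fin (j+1), had (qstr j k) (s k.succ) := by
          rw [Fin.prod_univ_succ]
          congr 1
          · congr 1; simp [qstr]
        have hz : m + (((j + 1 : ℕ) : ℤ) - 1) = m + ((j : ℤ) - 1) + 1 := by
          push_cast; ring
        rw [hprod, hcons, hz, smul_smul]
      · rw [if_neg (show ¬ (j + 1 < n + 1) by omega)]
        rw [hA1, hA1]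
        simp only [hjn, if_false]
        simp

end
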